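/- If increments within each individual's concavized chain have strictly decreasing efficiencies, then processing all increments globally in non-increasing efficiency order guarantees that at every point, the set of increments taken from each individual's chain is a prefix of that chain. -/

import Mathlib

/-- If efficiencies are strictly decreasing within each individual's chain, then
any prefix of the globally (non-increasingly) sorted merged list contains, for
each individual, exactly a prefix `{2, …, k}` of her chain. -/
theorem stmt13 {n : ℕ} (m : Fin n → ℕ) (e : Fin n → ℕ → ℝ)
    (hdec : ∀ i : Fin n, ∀ j j' : ℕ, 2 ≤ j → j < j' → j' ≤ m i → e i j' < e i j)
    (L : List (Fin n × ℕ)) (hnd : L.Nodup)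
    (hmem : ∀ p : Fin n × ℕ, p ∈ L ↔ 2 ≤ p.2 ∧ p.2 ≤ m p.1)
    (hsorted : L.Pairwise (fun p q => e q.1 q.2 ≤ e p.1 p.2)) :
    ∀ t : ℕ, ∀ i : Fin n, ∃ k : ℕ,
      ∀ j : ℕ, (i, j) ∈ L.take t ↔ 2 ≤ j ∧ j ≤ k := by
  intro t i
  -- downward closedness of the prefix for individual i
  have hdown : ∀ j j' : ℕ, 2 ≤ j → j < j' → (i, j') ∈ L.take t → (i, j) ∈ L.take t := by
    intro j j' h2 hlt hj'
    have hj'L : (i, j') ∈ L := List.mem_of_mem_take hj'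
    have hj'b := (hmem (i, j')).1 hj'L
    have hjL : (i, j) ∈ L := (hmem (i, j)).2 ⟨h2, le_trans (le_of_lt hlt) hj'b.2⟩
    by_contra hnot
    have hjd : (i, j) ∈ L.drop t := by
      have h' := hjL
      rw [← List.take_append_drop t L] at h'
      rcases List.mem_append.1 h' with h | h
      · exact absurd h hnot
      · exact h
    have hpw : List.Pairwise (fun p q => e q.1 q.2 ≤ e p.1 p.2) (L.take t ++ L.drop t) := by
      rw [List.take_append_drop]; exact hsorted
    have := (List.pairwise_append.1 hpw).2.2 _ hj' _ hjd
    have hstrict := hdec i j j' h2 hlt hj'b.2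
    simp only at this
    linarith
  -- candidate k: sup of the j's with (i,j) in the prefix
  set F : Finset ℕ := ((L.take t).toFinset.filter (fun p => p.1 = i)).image Prod.snd with hF
  have hmemF : ∀ j : ℕ, j ∈ F ↔ (i, j) ∈ L.take t := by
    intro j
    constructor
    · intro hj
      rcases Finset.mem_image.1 hj with ⟨p, hp, hpe⟩
      rcases Finset.mem_filter.1 hp with ⟨hp1, hp2⟩
      have : p = (i, j) := by
        cases p; simp_all
      rw [← this]; exact List.mem_toFinset.1 hp1
    · intro hj
      exact Finset.mem_image.2 ⟨(i, j), Finset.mem_filter.2 ⟨List.mem_toFinset.2 hj, rfl⟩, rfl⟩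
  refine ⟨F.sup id, fun j => ⟨?_, ?_⟩⟩
  · intro hj
    have h2 : 2 ≤ j := ((hmem (i, j)).1 (List.mem_of_mem_take hj)).1
    exact ⟨h2, Finset.le_sup (f := id) ((hmemF j).2 hj)⟩
  · rintro ⟨h2, hk⟩
    have hne : F.Nonempty := by
      by_contra hemp
      rw [Finset.not_nonempty_iff_eq_empty] at hemp
      rw [hemp] at hk
      simp at hk
      omega
    obtain ⟨j', hj'F, hj'⟩ := Finset.exists_mem_eq_sup F hne id
    have hj't : (i, j') ∈ L.take t := (hmemF j').1 hj'F
    have hle : j ≤ j' := by rw [hj'] at hk; exact hk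
    rcases eq_or_lt_of_le hle with heq | hlt
    · rw [heq]; exact hj't
    · exact hdown j j' h2 hlt hj't
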